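/- arXiv:2105.00759 — 11 statements merged into one kernel-verified Lean document; each statement's English description precedes it below -/
import Mathlib

section
/- For the NOR rule on a cyclic binary configuration, if at some time step t every maximal block of consecutive 0's in the configuration E_t has length at least 3, then applying the NOR rule twice returns the same configuration, i.e., E_{t+2} = E_t. -/
/-- The NOR rule. -/
def norRule (a b c : Bool) : Bool := !(a || b || c)

theorem nor_stable_of_no_short_zero_blocks (n : ℕ) (hn : 3 ≤ n)
    (E : ℕ → ZMod n → Bool)
    (hE : ∀ t (i : ZMod n),
      E (t + 1) i = norRule (E t (i - 1)) (E t i) (E t (i + 1)))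
    (t : ℕ)
    (h101 : ∀ i : ZMod n,
      ¬(E t i = true ∧ E t (i + 1) = false ∧ E t (i + 2) = true))
    (h1001 : ∀ i : ZMod n,
      ¬(E t i = true ∧ E t (i + 1) = false ∧ E t (i + 2) = false ∧
        E t (i + 3) = true)) :
    E (t + 2) = E t := by
  funext i
  have e1 : i - 1 - 1 = i - 2 := by ring
  have e2 : i - 1 + 1 = i := by ring
  have e3 : i + 1 - 1 = i := by ring
  have e4 : i + 1 + 1 = i + 2 := by ring
  have e5 : i - 1 + 2 = i + 1 := by ring
  have e6 : i - 1 + 3 = i + 2 := by ring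
  have e7 : i - 2 + 1 = i - 1 := by ring
  have e8 : i - 2 + 2 = i := by ring
  have e9 : i - 2 + 3 = i + 1 := by ring
  have H1 := h101 (i - 1)
  rw [e2, e5] at H1
  have H2 := h1001 (i - 1)
  rw [e2, e5, e6] at H2
  have H3 := h1001 (i - 2)
  rw [e7, e8, e9] at H3
  have step : E (t + 2) i = norRule (E (t+1) (i-1)) (E (t+1) i) (E (t+1) (i+1)) :=
    hE (t+1) i
  rw [step, hE t (i-1), hE t i, hE t (i+1), e1, e2, e3, e4]
  cases ha : E t (i - 2) <;> cases hb : E t (i - 1) <;> cases hc : E t i <;>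
    cases hd : E t (i + 1) <;> cases he : E t (i + 2) <;> simp_all [norRule]
end

section
/- For the NOR rule on a cyclic binary configuration, for every time t > 0, the configuration E_t contains neither the pattern 101 nor the pattern 1001; that is, there is no location i with E_t(i)=1, E_t(i+1)=0, E_t(i+2)=1, nor location i with E_t(i)=1, E_t(i+1)=0, E_t(i+2)=0, E_t(i+3)=1. -/
theorem nor_no_bad_patterns (n : ℕ) (hn : 5 ≤ n)
    (E : ℕ → ZMod n → Bool)
    (hE : ∀ t (i : ZMod n),
      E (t + 1) i = norRule (E t (i - 1)) (E t i) (E t (i + 1)))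
    (t : ℕ) (ht : 0 < t) :
    (∀ i : ZMod n,
      ¬(E t i = true ∧ E t (i + 1) = false ∧ E t (i + 2) = true)) ∧
    (∀ i : ZMod n,
      ¬(E t i = true ∧ E t (i + 1) = false ∧ E t (i + 2) = false ∧
        E t (i + 3) = true)) := by
  obtain ⟨s, rfl⟩ : ∃ s, t = s + 1 := ⟨t - 1, (Nat.succ_pred_eq_of_pos ht).symm⟩
  constructor
  · rintro i ⟨h1, h2, h3⟩
    rw [hE] at h1 h2 h3
    simp only [norRule, Bool.not_eq_true', Bool.not_eq_false',
      Bool.or_eq_false_iff, Bool.or_eq_true_iff] at h1 h2 h3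
    rw [show i + 2 - 1 = i + 1 by ring] at h3
    rw [show i + 1 - 1 = i by ring, show i + 1 + 1 = i + 2 by ring] at h2
    rcases h2 with (h | h) | h
    · exact absurd h1.1.2 (by simp [h])
    · exact absurd h1.2 (by simp [h])
    · exact absurd h3.1.2 (by simp [h])
  · rintro i ⟨h1, h2, h3, h4⟩
    rw [hE] at h1 h2 h4
    simp only [norRule, Bool.not_eq_true', Bool.not_eq_false',
      Bool.or_eq_false_iff, Bool.or_eq_true_iff] at h1 h2 h4
    rw [show i + 3 - 1 = i + 2 by ring] at h4
    rw [show i + 1 - 1 = i by ring, show i + 1 + 1 = i + 2 by ring] at h2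
    rcases h2 with (h | h) | h
    · exact absurd h1.1.2 (by simp [h])
    · exact absurd h1.2 (by simp [h])
    · exact absurd h4.1.1 (by simp [h])
end

section
/- Every environment evolving according to the NOR rule converges after at most one time step, in the sense that E_{t+2} = E_t for every t ≥ 1. -/
theorem nor_converges_after_one_step (n : ℕ) (hn : 5 ≤ n)
    (E : ℕ → ZMod n → Bool)
    (hE : ∀ t (i : ZMod n),
      E (t + 1) i = norRule (E t (i - 1)) (E t i) (E t (i + 1)))
    (t : ℕ) (ht : 1 ≤ t) :
    E (t + 2) = E t := by
  obtain ⟨s, rfl⟩ : ∃ s, t = s + 1 := ⟨t - 1, (Nat.succ_pred_eq_of_pos ht).symm⟩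
  have key : ∀ a b c d e f g : Bool,
      norRule (norRule (norRule a b c) (norRule b c d) (norRule c d e))
        (norRule (norRule b c d) (norRule c d e) (norRule d e f))
        (norRule (norRule c d e) (norRule d e f) (norRule e f g))
      = norRule c d e := by decide
  funext i
  have h3 : s + 1 + 2 = (s + 1 + 1) + 1 := rfl
  rw [h3]
  simp only [hE]
  have e1 : i - 1 - 1 - 1 = i - 3 := by ring
  have e2 : i - 1 - 1 = i - 2 := by ring
  have e3 : i - 1 - 1 + 1 = i - 1 := by ring
  have e4 : i - 1 + 1 = i := by ring
  have e5 : i + 1 - 1 = i := by ring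
  have e6 : i - 1 + 1 - 1 = i - 1 := by ring
  have e7 : i - 1 + 1 + 1 = i + 1 := by ring
  have e8 : i + 1 - 1 - 1 = i - 1 := by ring
  have e9 : i + 1 - 1 + 1 = i + 1 := by ring
  have e10 : i + 1 + 1 - 1 = i + 1 := by ring
  have e11 : i + 1 + 1 = i + 2 := by ring
  have e12 : i + 1 + 1 + 1 = i + 3 := by ring
  have e13 : i - 2 - 1 = i - 3 := by ring
  have e14 : i - 2 + 1 = i - 1 := by ring
  have e15 : i + 2 - 1 = i + 1 := by ring
  have e16 : i + 2 + 1 = i + 3 := by ring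
  simp only [e1, e2, e3, e4, e5, e6, e7, e8, e9, e10, e11, e12, e13, e14, e15, e16]
  exact key _ _ _ _ _ _ _
end

section
/- For the majority rule, finality is preserved: if the 1-neighborhood pattern (E_t(i-1), E_t(i), E_t(i+1)) is not equal to 101 or 010 (viewed as a triple of bits), then the pattern (E_{t+1}(i-1), E_{t+1}(i), E_{t+1}(i+1)) is also not equal to 101 or 010. -/
/-- The majority rule on bits. -/
def maj (a b c : Fin 2) : Fin 2 := if 2 ≤ a.val + b.val + c.val then 1 else 0

/-- A location `i` is final at configuration `σ` if its neighborhood pattern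
is not 101 nor 010. -/
def MajFinal {n : ℕ} (σ : ZMod n → Fin 2) (i : ZMod n) : Prop :=
  ¬((σ (i - 1), σ i, σ (i + 1)) = ((1 : Fin 2), (0 : Fin 2), (1 : Fin 2)) ∨
    (σ (i - 1), σ i, σ (i + 1)) = ((0 : Fin 2), (1 : Fin 2), (0 : Fin 2)))

theorem maj_finality_preserved (n : ℕ) (hn : 5 ≤ n)
    (E : ℕ → ZMod n → Fin 2)
    (hE : ∀ t (i : ZMod n),
      E (t + 1) i = maj (E t (i - 1)) (E t i) (E t (i + 1)))
    (t : ℕ) (i : ZMod n) (h : MajFinal (E t) i) :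
    MajFinal (E (t + 1)) i := by
  have key : ∀ a b c d e : Fin 2,
      ¬((b, c, d) = ((1 : Fin 2), (0 : Fin 2), (1 : Fin 2)) ∨
        (b, c, d) = ((0 : Fin 2), (1 : Fin 2), (0 : Fin 2))) →
      ¬((maj a b c, maj b c d, maj c d e) = ((1 : Fin 2), (0 : Fin 2), (1 : Fin 2)) ∨
        (maj a b c, maj b c d, maj c d e) = ((0 : Fin 2), (1 : Fin 2), (0 : Fin 2))) := by
    decide
  unfold MajFinal at h ⊢
  rw [hE t (i - 1), hE t i, hE t (i + 1), sub_add_cancel, add_sub_cancel_right]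
  exact key _ _ _ _ _ h
end

section
/- For the majority rule, if a location i is final at time t (its neighborhood pattern is not 101 or 010), then its value never changes: E_{t'}(i) = E_t(i) for all t' ≥ t. -/
lemma maj_pair (a b c : Fin 2) (h : a = b ∨ c = b) : maj a b c = b := by
  revert h; revert a b c; decide

lemma final_pair (a b c : Fin 2)
    (h : ¬((a, b, c) = ((1 : Fin 2), (0 : Fin 2), (1 : Fin 2)) ∨
      (a, b, c) = ((0 : Fin 2), (1 : Fin 2), (0 : Fin 2)))) : a = b ∨ c = b := by
  revert h; revert a b c; decide

theorem maj_final_value_never_changes (n : ℕ) (hn : 5 ≤ n)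
    (E : ℕ → ZMod n → Fin 2)
    (hE : ∀ t (i : ZMod n),
      E (t + 1) i = maj (E t (i - 1)) (E t i) (E t (i + 1)))
    (t : ℕ) (i : ZMod n) (h : MajFinal (E t) i) :
    ∀ t', t ≤ t' → E t' i = E t i := by
  have hfin : E t (i - 1) = E t i ∨ E t (i + 1) = E t i := final_pair _ _ _ h
  have main : ∀ t', t ≤ t' →
      (E t' i = E t i ∧ (E t' (i - 1) = E t' i ∨ E t' (i + 1) = E t' i)) := by
    intro t' ht'
    induction t', ht' using Nat.le_induction with
    | base => exact ⟨rfl, hfin⟩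
    | succ m hm ih =>
      obtain ⟨hv, hnb⟩ := ih
      have hvi : E (m + 1) i = E m i := by
        rw [hE m i]; exact maj_pair _ _ _ hnb
      refine ⟨hvi.trans hv, ?_⟩
      rcases hnb with hL | hR
      · left
        have : E (m + 1) (i - 1) = E m (i - 1) := by
          rw [hE m (i - 1)]
          refine maj_pair _ _ _ (Or.inr ?_)
          rw [sub_add_cancel, hL]
        rw [this, hvi, hL]
      · right
        have : E (m + 1) (i + 1) = E m (i + 1) := by
          rw [hE m (i + 1)]
          refine maj_pair _ _ _ (Or.inl ?_)
          rw [add_sub_cancel_right, hR]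
        rw [this, hvi, hR]
  exact fun t' ht' => (main t' ht').1
end

section
/- For the majority rule, a non-final location becomes final in one step if and only if one of its neighbors is final: if (E_t(i-1), E_t(i), E_t(i+1)) ∈ {101, 010}, then (E_{t+1}(i-1), E_{t+1}(i), E_{t+1}(i+1)) ∉ {101, 010} if and only if (E_t(i-2), E_t(i-1), E_t(i)) ∉ {101, 010} or (E_t(i), E_t(i+1), E_t(i+2)) ∉ {101, 010}. -/
theorem maj_nonfinal_becomes_final_iff (n : ℕ) (hn : 7 ≤ n)
    (E : ℕ → ZMod n → Fin 2)
    (hE : ∀ t (i : ZMod n),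
      E (t + 1) i = maj (E t (i - 1)) (E t i) (E t (i + 1)))
    (t : ℕ) (i : ZMod n) (h : ¬ MajFinal (E t) i) :
    MajFinal (E (t + 1)) i ↔
      (MajFinal (E t) (i - 1) ∨ MajFinal (E t) (i + 1)) := by
  have h1 : (i - 1) + 1 = i := by ring
  have h2 : (i + 1) - 1 = i := by ring
  unfold MajFinal at *
  simp only [hE, h1, h2] at *
  rw [not_not] at h
  rcases h with h | h <;>
  · simp only [Prod.mk.injEq] at h
    obtain ⟨h1, h2, h3⟩ := h
    rw [h1, h2, h3]
    generalize E t (i - 1 - 1) = a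
    generalize E t (i + 1 + 1) = e
    revert a e
    decide
end

section
/- For the majority rule, if E_t(Γ_1(i)) is final (not 101 or 010) and t ≤ n/2, then location i belongs to an interval of length at least 2t+1 of locations j all of which are final at time t, i.e., there exist a ≤ 0 ≤ b with b - a ≥ 2t such that for every offset d ∈ [a,b] the pattern (E_t(i+d-1), E_t(i+d), E_t(i+d+1)) is not 101 or 010. -/
lemma majFinal_iff {n : ℕ} (σ : ZMod n → Fin 2) (i : ZMod n) :
    MajFinal σ i ↔ σ (i - 1) = σ i ∨ σ i = σ (i + 1) := by
  unfold MajFinal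
  generalize σ (i - 1) = p
  generalize σ i = q
  generalize σ (i + 1) = r
  revert p q r; decide

lemma maj_xcc : ∀ x c : Fin 2, maj x c c = c := by decide
lemma maj_ccx : ∀ c x : Fin 2, maj c c x = c := by decide
lemma maj_ne_right : ∀ c y z : Fin 2, y ≠ z → maj c y z = c := by decide
lemma maj_ne_left : ∀ z y c : Fin 2, z ≠ y → maj z y c = c := by decide
lemma fin2_eq_of_ne : ∀ u a b : Fin 2, a ≠ u → b ≠ u → a = b := by decide
lemma maj_cancel_left : ∀ z v u : Fin 2, u ≠ v → maj z v u = v → z = v := by decide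
lemma maj_cancel_right : ∀ u v z : Fin 2, u ≠ v → maj u v z = v → z = v := by decide

section

variable {n : ℕ} (E : ℕ → ZMod n → Fin 2)
  (hE : ∀ t (i : ZMod n), E (t + 1) i = maj (E t (i - 1)) (E t i) (E t (i + 1)))

include hE

/-- Monochromatic pairs persist. -/
lemma pair_persist (t : ℕ) (k : ZMod n) (hk : E t k = E t (k + 1)) :
    E (t + 1) k = E t k ∧ E (t + 1) (k + 1) = E t k := by
  constructor
  · rw [hE, ← hk]; exact maj_xcc _ _
  · rw [hE]
    have h1 : (k + 1) - 1 = k := by ring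
    rw [h1, ← hk]; exact maj_ccx _ _

/-- Finality spreads by one in each direction per step. -/
lemma step_final (t : ℕ) (j : ZMod n) (h : MajFinal (E t) j) :
    MajFinal (E (t + 1)) (j - 1) ∧ MajFinal (E (t + 1)) j ∧
      MajFinal (E (t + 1)) (j + 1) := by
  have hsub : (j - 1) + 1 = j := by ring
  rw [majFinal_iff] at h
  rcases h with h | h
  · -- pair (j-1, j)
    have hp := pair_persist E hE t (j - 1) (by rw [hsub, h])
    rw [hsub] at hp
    obtain ⟨hp1, hp2⟩ := hp
    refine ⟨?_, ?_, ?_⟩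
    · rw [majFinal_iff]; right; rw [hsub, hp1, hp2]
    · rw [majFinal_iff]; left; rw [hp1, hp2]
    · rw [majFinal_iff]
      have hl : (j + 1) - 1 = j := by ring
      by_cases hyz : E t (j + 1) = E t (j + 1 + 1)
      · right
        have hq := pair_persist E hE t (j + 1) hyz
        rw [hq.1, hq.2]
      · left
        rw [hl, hp2, hE t (j + 1), hl, maj_ne_right _ _ _ hyz, h]
  · -- pair (j, j+1)
    have hp := pair_persist E hE t j h
    obtain ⟨hp1, hp2⟩ := hp
    refine ⟨?_, ?_, ?_⟩
    · rw [majFinal_iff]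
      by_cases hyz : E t (j - 1 - 1) = E t (j - 1 - 1 + 1)
      · left
        have hq := pair_persist E hE t (j - 1 - 1) hyz
        have e1 : j - 1 - 1 + 1 = j - 1 := by ring
        rw [e1] at hq
        rw [hq.1, hq.2]
      · right
        have e1 : j - 1 - 1 + 1 = j - 1 := by ring
        rw [e1] at hyz
        rw [hsub, hp1, hE t (j - 1), hsub, maj_ne_left _ _ _ hyz]
    · rw [majFinal_iff]; right; rw [hp1, hp2]
    · rw [majFinal_iff]; left
      have hl : (j + 1) - 1 = j := by ring
      rw [hl, hp1, hp2]

/-- A cell final at time `t+1` has a neighbor (or itself) final at time `t`. -/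
lemma back_final (t : ℕ) (i : ZMod n) (h : MajFinal (E (t + 1)) i) :
    MajFinal (E t) (i - 1) ∨ MajFinal (E t) i ∨ MajFinal (E t) (i + 1) := by
  by_cases h0 : MajFinal (E t) i
  · exact Or.inr (Or.inl h0)
  rw [majFinal_iff] at h h0
  push_neg at h0
  obtain ⟨hL, hR⟩ := h0
  have hv : E t (i - 1) = E t (i + 1) :=
    fin2_eq_of_ne (E t i) _ _ hL fun hh => hR hh.symm
  have hmid : E (t + 1) i = E t (i - 1) := by
    rw [hE]
    have hrw : maj (E t (i - 1)) (E t i) (E t (i + 1)) =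
        maj (E t (i - 1)) (E t i) (E t (i - 1)) := by rw [hv]
    rw [hrw]
    exact maj_ne_right _ _ _ fun hh => hL hh.symm
  rcases h with h | h
  · left
    rw [majFinal_iff]; left
    have e1 : (i - 1) + 1 = i := by ring
    have hm : maj (E t (i - 1 - 1)) (E t (i - 1)) (E t i) = E t (i - 1) := by
      have h2 := h.trans hmid
      rw [hE, e1] at h2
      exact h2
    exact maj_cancel_left _ _ _ (fun hh => hL hh.symm) hm
  · right; right
    rw [majFinal_iff]; right
    have e1 : (i + 1) - 1 = i := by ring
    have hm : maj (E t i) (E t (i + 1)) (E t (i + 1 + 1)) = E t (i + 1) := by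
      have h2 : E (t + 1) (i + 1) = E t (i + 1) := by rw [← h, hmid, hv]
      rw [hE, e1] at h2
      exact h2
    exact (maj_cancel_right _ _ _ hR hm).symm

end

theorem maj_final_in_long_final_interval (n : ℕ) (hn : 5 ≤ n)
    (E : ℕ → ZMod n → Fin 2)
    (hE : ∀ t (i : ZMod n),
      E (t + 1) i = maj (E t (i - 1)) (E t i) (E t (i + 1)))
    (t : ℕ) (ht : t ≤ n / 2) (i : ZMod n) (h : MajFinal (E t) i) :
    ∃ a b : ℤ, a ≤ 0 ∧ 0 ≤ b ∧ (2 * t : ℤ) ≤ b - a ∧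
      ∀ d : ℤ, a ≤ d → d ≤ b → MajFinal (E t) (i + (d : ZMod n)) := by
  clear hn ht
  induction t generalizing i with
  | zero =>
    refine ⟨0, 0, le_refl _, le_refl _, by norm_num, ?_⟩
    intro d hd1 hd2
    have hd : d = 0 := le_antisymm hd2 hd1
    subst hd
    simpa using h
  | succ t IH =>
    obtain ⟨e, he1, he2, he⟩ :
        ∃ e : ℤ, -1 ≤ e ∧ e ≤ 1 ∧ MajFinal (E t) (i + (e : ZMod n)) := by
      rcases back_final E hE t i h with h' | h' | h'
      · exact ⟨-1, by omega, by omega, by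
          rw [show i + ((-1 : ℤ) : ZMod n) = i - 1 by push_cast; ring]; exact h'⟩
      · exact ⟨0, by omega, by omega, by simpa using h'⟩
      · exact ⟨1, by omega, by omega, by
          rw [show i + ((1 : ℤ) : ZMod n) = i + 1 by push_cast; ring]; exact h'⟩
    obtain ⟨a, b, ha, hb, hab, hall⟩ := IH (i + (e : ZMod n)) he
    refine ⟨a - 1 + e, b + 1 + e, by omega, by omega, by push_cast; omega, ?_⟩
    intro d hd1 hd2
    have tri : d - e = a - 1 ∨ (a ≤ d - e ∧ d - e ≤ b) ∨ d - e = b + 1 := by omega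
    rcases tri with h1 | ⟨h1, h2⟩ | h1
    · have hf := hall a le_rfl (by omega)
      have hs := (step_final E hE t _ hf).1
      have cell : i + (e : ZMod n) + ((a : ℤ) : ZMod n) - 1 = i + ((d : ℤ) : ZMod n) := by
        have hd : d = a - 1 + e := by omega
        subst hd; push_cast; ring
      rwa [cell] at hs
    · have hf := hall (d - e) h1 h2
      have hs := (step_final E hE t _ hf).2.1
      have cell : i + (e : ZMod n) + (((d - e : ℤ)) : ZMod n) = i + ((d : ℤ) : ZMod n) := by
        push_cast; ring
      rwa [cell] at hs
    · have hf := hall b (by omega) le_rfl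
      have hs := (step_final E hE t _ hf).2.2
      have cell : i + (e : ZMod n) + ((b : ℤ) : ZMod n) + 1 = i + ((d : ℤ) : ZMod n) := by
        have hd : d = b + 1 + e := by omega
        subst hd; push_cast; ring
      rwa [cell] at hs
end

section
/- For the majority rule, if all locations are non-final at time t (every 1-neighborhood is 101 or 010), then the configuration is alternating and E_{t+1}(i) = 1 - E_t(i) for every i; moreover all locations remain non-final at time t+1. -/
/-- A location `i` is non-final at configuration `σ` if its neighborhood
pattern is 101 or 010. -/
def MajNonFinal {n : ℕ} (σ : ZMod n → Fin 2) (i : ZMod n) : Prop :=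
  (σ (i - 1), σ i, σ (i + 1)) = ((1 : Fin 2), (0 : Fin 2), (1 : Fin 2)) ∨
  (σ (i - 1), σ i, σ (i + 1)) = ((0 : Fin 2), (1 : Fin 2), (0 : Fin 2))

theorem maj_all_nonfinal_alternates (n : ℕ) (hn : 3 ≤ n)
    (E : ℕ → ZMod n → Fin 2)
    (hE : ∀ t (i : ZMod n),
      E (t + 1) i = maj (E t (i - 1)) (E t i) (E t (i + 1)))
    (t : ℕ) (h : ∀ i : ZMod n, MajNonFinal (E t) i) :
    (∀ i : ZMod n, E t (i + 1) ≠ E t i) ∧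
    (∀ i : ZMod n, E (t + 1) i = 1 - E t i) ∧
    (∀ i : ZMod n, MajNonFinal (E (t + 1)) i) := by
  have flip : ∀ i : ZMod n, E (t + 1) i = 1 - E t i := by
    intro i
    rcases h i with h1 | h1 <;> simp only [Prod.mk.injEq] at h1 <;>
      rw [hE t i, h1.1, h1.2.1, h1.2.2] <;> decide
  refine ⟨?_, flip, ?_⟩
  · intro i
    rcases h i with h1 | h1 <;> simp only [Prod.mk.injEq] at h1 <;>
      rw [h1.2.1, h1.2.2] <;> decide
  · intro i
    rcases h i with h1 | h1 <;> simp only [Prod.mk.injEq] at h1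
    · right
      simp only [Prod.mk.injEq, flip, h1.1, h1.2.1, h1.2.2]
      decide
    · left
      simp only [Prod.mk.injEq, flip, h1.1, h1.2.1, h1.2.2]
      decide
end

section
/- For the 'flip if homogeneous' rule fih, where fih(a,b,c) = b unless a=b=c in which case it equals ¬b: if the triple at location i at time t is neither 000 nor 111, then the triple at location i at time t+1 is neither 000 nor 111. -/
/-- The 'flip if homogeneous' rule. -/
def fih (a b c : Bool) : Bool := if a = b ∧ b = c then !b else b

theorem fih_finality_preserved (n : ℕ) (hn : 5 ≤ n)
    (E : ℕ → ZMod n → Bool)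
    (hE : ∀ t (i : ZMod n),
      E (t + 1) i = fih (E t (i - 1)) (E t i) (E t (i + 1)))
    (t : ℕ) (i : ZMod n)
    (h : ¬((E t (i - 1), E t i, E t (i + 1)) = (false, false, false) ∨
          (E t (i - 1), E t i, E t (i + 1)) = (true, true, true))) :
    ¬((E (t + 1) (i - 1), E (t + 1) i, E (t + 1) (i + 1)) =
        (false, false, false) ∨
      (E (t + 1) (i - 1), E (t + 1) i, E (t + 1) (i + 1)) =
        (true, true, true)) := by
  have h1 : i - 1 + 1 = i := by ring
  have h2 : i + 1 - 1 = i := by ring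
  simp only [hE, h1, h2]
  revert h
  generalize E t (i - 1 - 1) = a
  generalize E t (i - 1) = b
  generalize E t i = c
  generalize E t (i + 1) = d
  generalize E t (i + 1 + 1) = e
  cases a <;> cases b <;> cases c <;> cases d <;> cases e <;> simp [fih]
end

section
/- For the 'flip if homogeneous' rule, a non-final location becomes final in one step if and only if it has a final neighbor: if (E_t(i-1), E_t(i), E_t(i+1)) ∈ {000, 111}, then (E_{t+1}(i-1), E_{t+1}(i), E_{t+1}(i+1)) ∉ {000, 111} if and only if (E_t(i-2), E_t(i-1), E_t(i)) ∉ {000, 111} or (E_t(i), E_t(i+1), E_t(i+2)) ∉ {000, 111}. -/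
/-- A location `i` is final at configuration `σ` (for `fih`) if its
neighborhood pattern is not 000 nor 111. -/
def FihFinal {n : ℕ} (σ : ZMod n → Bool) (i : ZMod n) : Prop :=
  ¬((σ (i - 1), σ i, σ (i + 1)) = (false, false, false) ∨
    (σ (i - 1), σ i, σ (i + 1)) = (true, true, true))

theorem fih_nonfinal_becomes_final_iff (n : ℕ) (hn : 7 ≤ n)
    (E : ℕ → ZMod n → Bool)
    (hE : ∀ t (i : ZMod n),
      E (t + 1) i = fih (E t (i - 1)) (E t i) (E t (i + 1)))
    (t : ℕ) (i : ZMod n) (h : ¬ FihFinal (E t) i) :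
    FihFinal (E (t + 1)) i ↔
      (FihFinal (E t) (i - 1) ∨ FihFinal (E t) (i + 1)) := by
  have h' := not_not.mp h
  have e1 : i - 1 - 1 = i - 2 := by ring
  have e2 : i - 1 + 1 = i := by ring
  have e3 : i + 1 - 1 = i := by ring
  have e4 : i + 1 + 1 = i + 2 := by ring
  simp only [FihFinal, hE, e1, e2, e3, e4, Prod.mk.injEq] at *
  rcases h' with ⟨h1, h2, h3⟩ | ⟨h1, h2, h3⟩ <;>
    rcases hx : (E t (i - 2)) <;> rcases hy : (E t (i + 2)) <;>
      simp [fih, h1, h2, h3, hx, hy]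
end

section
/- For the majority rule, if E evolves according to maj and the pair (t,i) has an ancestor (t',i') with final neighborhood (where (t,i) descends from (t',i') means t ≥ t' and dist(i,i') ≤ t − t'), then (t,i) has final neighborhood; equivalently, if the neighborhood of i at time t is 101 or 010, then the neighborhoods of all ancestors (t',i') of (t,i) are 101 or 010. -/
/-- Cyclic distance on `ZMod n`. -/
def cycDist {n : ℕ} (i i' : ZMod n) : ℕ := min (i - i').val (i' - i).val

lemma maj5 : ∀ x0 x1 x2 x3 x4 : Fin 2,
    ((maj x0 x1 x2, maj x1 x2 x3, maj x2 x3 x4) = (1, 0, 1) ∨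
     (maj x0 x1 x2, maj x1 x2 x3, maj x2 x3 x4) = (0, 1, 0)) →
    ((x0, x1, x2, x3, x4) = (1, 0, 1, 0, 1) ∨
     (x0, x1, x2, x3, x4) = (0, 1, 0, 1, 0)) := by decide

lemma maj_step (n : ℕ) (E : ℕ → ZMod n → Fin 2)
    (hE : ∀ t (i : ZMod n),
      E (t + 1) i = maj (E t (i - 1)) (E t i) (E t (i + 1)))
    (t : ℕ) (i j : ZMod n) (hj : j = i - 1 ∨ j = i ∨ j = i + 1)
    (hfin : MajFinal (E t) j) : MajFinal (E (t + 1)) i := by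
  intro h
  have h1 := hE t (i - 1)
  have h2 := hE t i
  have h3 := hE t (i + 1)
  have e1 : i - 1 - 1 = i - 2 := by ring
  have e2 : i - 1 + 1 = i := by ring
  have e3 : i + 1 - 1 = i := by ring
  have e4 : i + 1 + 1 = i + 2 := by ring
  rw [e1, e2] at h1
  rw [e3, e4] at h3
  rw [h1, h2, h3] at h
  have key := maj5 (E t (i - 2)) (E t (i - 1)) (E t i) (E t (i + 1)) (E t (i + 2)) h
  apply hfin
  rcases hj with rfl | rfl | rfl
  · rw [e1, e2]
    rcases key with hk | hk <;>
      simp only [Prod.mk.injEq] at hk <;>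
      [left; right] <;>
      simp [hk.1, hk.2.1, hk.2.2.1]
  · rcases key with hk | hk <;>
      simp only [Prod.mk.injEq] at hk <;>
      [right; left] <;>
      simp [hk.2.1, hk.2.2.1, hk.2.2.2.1]
  · rw [e3, e4]
    rcases key with hk | hk <;>
      simp only [Prod.mk.injEq] at hk <;>
      [left; right] <;>
      simp [hk.2.2.1, hk.2.2.2.1, hk.2.2.2.2]

lemma val_sub_one_of_ne {n : ℕ} [NeZero n] (a : ZMod n) (ha : a ≠ 0) :
    (a - 1).val = a.val - 1 := by
  have h1 : 1 ≤ a.val := Nat.one_le_iff_ne_zero.mpr (fun h => ha ((ZMod.val_eq_zero a).mp h))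
  have h2 : a.val < n := ZMod.val_lt a
  have : a - 1 = ((a.val - 1 : ℕ) : ZMod n) := by
    push_cast [Nat.cast_sub h1]
    simp [ZMod.natCast_val, ZMod.cast_id]
  rw [this, ZMod.val_natCast, Nat.mod_eq_of_lt (by omega)]

theorem maj_final_ancestor_implies_final (n : ℕ) (hn : 5 ≤ n)
    (E : ℕ → ZMod n → Fin 2)
    (hE : ∀ t (i : ZMod n),
      E (t + 1) i = maj (E t (i - 1)) (E t i) (E t (i + 1)))
    (t t' : ℕ) (i i' : ZMod n)
    (htt' : t' ≤ t) (hdist : cycDist i i' ≤ t - t')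
    (hfin : MajFinal (E t') i') :
    MajFinal (E t) i := by
  haveI : NeZero n := ⟨by omega⟩
  obtain ⟨d, rfl⟩ := Nat.le.dest htt'
  rw [Nat.add_sub_cancel_left] at hdist
  clear htt'
  induction d generalizing i with
  | zero =>
    have h0 : cycDist i i' = 0 := Nat.le_zero.mp hdist
    unfold cycDist at h0
    have : i = i' := by
      rcases Nat.min_eq_zero_iff.mp h0 with h | h
      · have := (ZMod.val_eq_zero _).mp h; linear_combination this
      · have := (ZMod.val_eq_zero _).mp h; linear_combination -this
    rwa [this]
  | succ d ih =>
    by_cases hii : i = i'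
    · subst hii
      have : cycDist i i = 0 := by simp [cycDist]
      exact maj_step n E hE (t' + d) i i (Or.inr (Or.inl rfl))
        (ih i (by omega))
    · by_cases hle : (i' - i).val ≤ (i - i').val
      · refine maj_step n E hE (t' + d) i (i + 1) (Or.inr (Or.inr rfl)) (ih (i + 1) ?_)
        have hne : i' - i ≠ 0 := fun h => hii (by linear_combination -h)
        have hv : (i' - (i + 1)).val = (i' - i).val - 1 := by
          rw [show i' - (i + 1) = (i' - i) - 1 by ring]
          exact val_sub_one_of_ne _ hne
        have hd : cycDist i i' = (i' - i).val := min_eq_right hle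
        calc cycDist (i + 1) i' ≤ (i' - (i + 1)).val := min_le_right _ _
          _ ≤ d := by rw [hv]; omega
      · refine maj_step n E hE (t' + d) i (i - 1) (Or.inl rfl) (ih (i - 1) ?_)
        have hne : i - i' ≠ 0 := fun h => hii (by linear_combination h)
        have hv : ((i - 1) - i').val = (i - i').val - 1 := by
          rw [show (i - 1) - i' = (i - i') - 1 by ring]
          exact val_sub_one_of_ne _ hne
        have hd : cycDist i i' = (i - i').val := min_eq_left (le_of_not_ge hle)
        calc cycDist (i - 1) i' ≤ ((i - 1) - i').val := min_le_left _ _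
          _ ≤ d := by rw [hv]; omega
end
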